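/- Let π be a 132-avoiding permutation of length n with exactly r short values, so that π has n−r right-to-left maxima, occurring at positions p_1 < p_2 < … < p_{n−r}. Then inserting the value n+1 at the front of π yields a 132-avoiding permutation of length n+1 with exactly r short values, and for each 1 ≤ j ≤ n−r, inserting the value n+1 immediately after position p_j yields a 132-avoiding permutation of length n+1 with exactly r+j short values. Consequently, for every s with r ≤ s ≤ n there is exactly one position i ∈ {0,…,n} such that inserting the new maximum at position i produces (with no removal) an element of A(n+1, s), and no insertion produces an element of A(n+1, s) with s < r or s > n. -/

import Mathlib

open List

attribute [local instance] Classical.propDecidable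

/-- `l` is a permutation of length `n`, i.e. a list containing each of `1,…,n` exactly once. -/
def IsPermList (n : ℕ) (l : List ℕ) : Prop :=
  l.Perm (List.range' 1 n)

/-- Two sequences (with distinct entries) are order-isomorphic: same length and the same
pairwise order relations. -/
def OrderIsoList (a b : List ℕ) : Prop :=
  a.length = b.length ∧
    ∀ i j, i < j → j < a.length →
      (a.getD i 0 < a.getD j 0 ↔ b.getD i 0 < b.getD j 0)

/-- `l` contains the pattern `p`: some subsequence of `l` is order-isomorphic to `p`. -/
def ContainsPat (l p : List ℕ) : Prop :=
  ∃ s, s.Sublist l ∧ OrderIsoList s p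

/-- `l` avoids the pattern `p`. -/
def AvoidsPat (l p : List ℕ) : Prop := ¬ ContainsPat l p

/-- Relabel the entries of a list of distinct naturals order-isomorphically with `1,…,m`. -/
def standardize (l : List ℕ) : List ℕ :=
  l.map fun x => (l.filter fun y => y ≤ x).length

/-- Insert the new maximum value `l.length + 1` immediately after the first `i` entries. -/
def insertMax (l : List ℕ) (i : ℕ) : List ℕ :=
  l.take i ++ (l.length + 1) :: l.drop i

/-- The insertion step at position `i` for the pattern `p`: insert a new maximum after the
first `i` entries, keep the longest prefix avoiding `p` (i.e. remove the minimal suffix so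
that the result avoids `p`), then standardize. -/
noncomputable def insStep (p l : List ℕ) (i : ℕ) : List ℕ :=
  standardize ((insertMax l i).take
    (Nat.findGreatest (fun k => AvoidsPat ((insertMax l i).take k) p)
      (insertMax l i).length))

/-- The entry at (0-indexed) position `i` of `l` is a right-to-left maximum: it is larger
than every entry to its right. -/
def IsRLMax (l : List ℕ) (i : ℕ) : Prop :=
  ∀ j, i < j → j < l.length → l.getD j 0 < l.getD i 0

/-- The number of short values of `l`: entries that are not right-to-left maxima. -/
noncomputable def shortCount (l : List ℕ) : ℕ :=
  {i | i < l.length ∧ ¬ IsRLMax l i}.ncard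

/-- `A132 n k` is the set of `132`-avoiding permutations of length `n` with exactly `k`
short values. -/
def A132 (n k : ℕ) : Set (List ℕ) :=
  {l | IsPermList n l ∧ AvoidsPat l [1, 3, 2] ∧ shortCount l = k}


section Aux132

open List

lemma card_filter_fin_lt (N c : ℕ) (h : c ≤ N) :
    ((Finset.univ : Finset (Fin N)).filter fun m => m.val < c).card = c := by
  classical
  have : ((Finset.univ : Finset (Fin N)).filter fun m => m.val < c)
      = (Finset.range c).attachFin (fun m hm => lt_of_lt_of_le (Finset.mem_range.mp hm) h) := by
    ext m; simp [Finset.mem_attachFin]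
  rw [this, Finset.card_attachFin, Finset.card_range]

lemma orderIso132 {a b c : ℕ} (h1 : a < b) (h2 : a < c) (h3 : ¬ b < c) :
    OrderIsoList [a, b, c] [1, 3, 2] := by
  refine ⟨rfl, fun i j hij hj => ?_⟩
  simp only [List.length] at hj
  interval_cases j <;> interval_cases i <;> simp_all

lemma contains132_of {l : List ℕ} {a b c : ℕ} (hs : [a, b, c].Sublist l)
    (h1 : a < b) (h2 : a < c) (h3 : ¬ b < c) : ContainsPat l [1, 3, 2] :=
  ⟨[a, b, c], hs, orderIso132 h1 h2 h3⟩

lemma contains132_elim {l : List ℕ} (hc : ContainsPat l [1, 3, 2]) :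
    ∃ a b c, [a, b, c].Sublist l ∧ a < b ∧ a < c ∧ ¬ b < c := by
  obtain ⟨s, hs, hlen, hord⟩ := hc
  have h3 : s.length = 3 := by simpa using hlen
  obtain ⟨a, b, c, rfl⟩ := List.length_eq_three.mp h3
  refine ⟨a, b, c, hs, ?_, ?_, ?_⟩
  · have := hord 0 1 (by omega) (by simp)
    simpa using this
  · have := hord 0 2 (by omega) (by simp)
    simpa using this
  · have := hord 1 2 (by omega) (by simp)
    simp at this
    omega

lemma getD_eq' {l : List ℕ} {k : ℕ} (h : k < l.length) : l.getD k 0 = l[k] :=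
  List.getD_eq_getElem l 0 h

lemma getD_mem' {l : List ℕ} {k : ℕ} (h : k < l.length) : l.getD k 0 ∈ l := by
  rw [getD_eq' h]; exact List.getElem_mem _

lemma perm_length {n : ℕ} {π : List ℕ} (h : IsPermList n π) : π.length = n := by
  simpa using h.length_eq

lemma perm_nodup {n : ℕ} {π : List ℕ} (h : IsPermList n π) : π.Nodup :=
  h.nodup_iff.mpr (List.nodup_range' 1 (by omega))

lemma perm_mem_le {n : ℕ} {π : List ℕ} (h : IsPermList n π) {x : ℕ} (hx : x ∈ π) : x ≤ n := by
  have := h.mem_iff.mp hx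
  rw [List.mem_range'_1] at this
  omega

lemma length_insertMax {π : List ℕ} {i : ℕ} (hi : i ≤ π.length) :
    (insertMax π i).length = π.length + 1 := by
  simp [insertMax]; omega

lemma getD_insertMax_lt {π : List ℕ} {i k : ℕ} (hi : i ≤ π.length) (hk : k < i) :
    (insertMax π i).getD k 0 = π.getD k 0 := by
  have hkl : k < π.length := lt_of_lt_of_le hk hi
  rw [insertMax, List.getD_append _ _ _ _ (by simp; omega)]
  rw [getD_eq' (by simp; omega), getD_eq' hkl]
  exact List.getElem_take ..

lemma getD_insertMax_self {π : List ℕ} {i : ℕ} (hi : i ≤ π.length) :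
    (insertMax π i).getD i 0 = π.length + 1 := by
  rw [insertMax, List.getD_append_right _ _ _ _ (by simp)]
  simp [Nat.min_eq_left hi]

lemma getD_insertMax_gt {π : List ℕ} {i k : ℕ} (hi : i ≤ π.length) (hk : i < k)
    (hk2 : k ≤ π.length) : (insertMax π i).getD k 0 = π.getD (k - 1) 0 := by
  rw [insertMax, List.getD_append_right _ _ _ _ (by simp; omega)]
  have h1 : k - (π.take i).length = (k - i - 1) + 1 := by simp; omega
  rw [h1, List.getD_cons_succ]
  rw [getD_eq' (by simp; omega), getD_eq' (by omega)]
  rw [List.getElem_drop]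
  congr 1
  omega

lemma isPermList_insertMax {n : ℕ} {π : List ℕ} (h : IsPermList n π) (i : ℕ) :
    IsPermList (n + 1) (insertMax π i) := by
  have hl := perm_length h
  have h1 : (insertMax π i).Perm ((n + 1) :: π) := by
    rw [insertMax, hl]
    exact List.perm_middle.trans (by rw [List.take_append_drop])
  have h2 : ((n + 1) :: π).Perm ((n + 1) :: List.range' 1 n) := h.cons _
  have h3 : ((n + 1) :: List.range' 1 n).Perm (List.range' 1 (n + 1)) := by
    rw [List.range'_concat]
    have e : 1 + 1 * n = n + 1 := by ring
    rw [e]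
    exact (List.perm_append_singleton _ _).symm
  exact (h1.trans h2).trans h3

section Main

variable {n r : ℕ} {π : List ℕ}

lemma not_rlmax_insertMax_lt (h : IsPermList n π) {i k : ℕ} (hi : i ≤ n) (hk : k < i) :
    ¬ IsRLMax (insertMax π i) k := by
  have hl := perm_length h
  intro hR
  have h1 := hR i hk (by rw [length_insertMax (by omega)]; omega)
  rw [getD_insertMax_self (by omega), getD_insertMax_lt (by omega) hk] at h1
  have h2 : π.getD k 0 ≤ n := perm_mem_le h (getD_mem' (by omega))
  omega

lemma rlmax_insertMax_self (h : IsPermList n π) {i : ℕ} (hi : i ≤ n) :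
    IsRLMax (insertMax π i) i := by
  have hl := perm_length h
  intro j hj1 hj2
  rw [length_insertMax (by omega)] at hj2
  rw [getD_insertMax_self (by omega), getD_insertMax_gt (by omega) hj1 (by omega)]
  have h2 : π.getD (j - 1) 0 ≤ n := perm_mem_le h (getD_mem' (by omega))
  omega

lemma rlmax_insertMax_gt (h : IsPermList n π) {i k : ℕ} (hi : i ≤ n) (hk1 : i < k)
    (hk2 : k ≤ n) : IsRLMax (insertMax π i) k ↔ IsRLMax π (k - 1) := by
  have hl := perm_length h
  constructor
  · intro hR j hj1 hj2
    rw [hl] at hj2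
    have := hR (j + 1) (by omega) (by rw [length_insertMax (by omega)]; omega)
    rw [getD_insertMax_gt (by omega) (by omega) (by omega),
      getD_insertMax_gt (by omega) hk1 (by omega)] at this
    simpa using this
  · intro hR j hj1 hj2
    rw [length_insertMax (by omega)] at hj2
    rw [getD_insertMax_gt (by omega) (by omega) (by omega),
      getD_insertMax_gt (by omega) hk1 (by omega)]
    exact hR (j - 1) (by omega) (by omega)

lemma shortCount_eq (l : List ℕ) :
    shortCount l = ((Finset.range l.length).filter fun i => ¬ IsRLMax l i).card := by
  rw [shortCount, ← Set.ncard_coe_finset]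
  congr 1
  ext k
  simp

lemma shortCount_insertMax (h : IsPermList n π) {i : ℕ} (hi : i ≤ n) :
    shortCount (insertMax π i)
      = shortCount π + ((Finset.range i).filter fun k => IsRLMax π k).card := by
  classical
  have hl := perm_length h
  rw [shortCount_eq, shortCount_eq, length_insertMax (by omega), hl]
  have hsplit : ((Finset.range (n + 1)).filter fun k => ¬ IsRLMax (insertMax π i) k)
      = (Finset.range i)
        ∪ (((Finset.range n).filter fun k => i ≤ k ∧ ¬ IsRLMax π k).image (· + 1)) := by
    ext k
    simp only [Finset.mem_filter, Finset.mem_range, Finset.mem_union, Finset.mem_image]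
    constructor
    · rintro ⟨hk, hnR⟩
      rcases lt_trichotomy k i with hki | rfl | hki
      · exact Or.inl hki
      · exact absurd (rlmax_insertMax_self h hi) hnR
      · refine Or.inr ⟨k - 1, ⟨by omega, by omega, fun hRR => hnR ?_⟩, by omega⟩
        exact (rlmax_insertMax_gt h hi hki (by omega)).mpr hRR
    · rintro (hki | ⟨a, ⟨han, hia, hnR⟩, rfl⟩)
      · exact ⟨by omega, not_rlmax_insertMax_lt h hi hki⟩
      · refine ⟨by omega, fun hRR => hnR ?_⟩
        have := (rlmax_insertMax_gt h hi (by omega) (by omega)).mp hRR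
        simpa using this
  rw [hsplit]
  have hdis : Disjoint (Finset.range i)
      (((Finset.range n).filter fun k => i ≤ k ∧ ¬ IsRLMax π k).image (· + 1)) := by
    rw [Finset.disjoint_left]
    rintro x hx hx2
    simp only [Finset.mem_image, Finset.mem_filter, Finset.mem_range] at hx hx2
    obtain ⟨a, ⟨_, hia, _⟩, rfl⟩ := hx2
    omega
  rw [Finset.card_union_of_disjoint hdis, Finset.card_range,
    Finset.card_image_of_injective _ (add_left_injective 1)]
  set S := (Finset.range n).filter fun k => ¬ IsRLMax π k with hS
  set B := (Finset.range n).filter fun k => i ≤ k ∧ ¬ IsRLMax π k with hB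
  set A := (Finset.range n).filter fun k => k < i ∧ ¬ IsRLMax π k with hA
  have e1 : A.card + B.card = S.card := by
    have h1 : S.filter (fun k => ¬ i ≤ k) = A := by
      rw [hS, hA, Finset.filter_filter]
      apply Finset.filter_congr
      intro x _
      constructor
      · rintro ⟨h1, h2⟩; exact ⟨by omega, h1⟩
      · rintro ⟨h1, h2⟩; exact ⟨h2, by omega⟩
    have h2 : S.filter (fun k => i ≤ k) = B := by
      rw [hS, hB, Finset.filter_filter]
      apply Finset.filter_congr
      intro x _
      tauto
    rw [← h1, ← h2]
    rw [Nat.add_comm]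
    exact Finset.card_filter_add_card_filter_not _
  have e2 : A.card + ((Finset.range i).filter fun k => IsRLMax π k).card = i := by
    have h1 : A = (Finset.range i).filter fun k => ¬ IsRLMax π k := by
      rw [hA]
      ext x
      simp only [Finset.mem_filter, Finset.mem_range]
      constructor
      · rintro ⟨_, h1, h2⟩; exact ⟨h1, h2⟩
      · rintro ⟨h1, h2⟩; exact ⟨by omega, h1, h2⟩
    rw [h1, Nat.add_comm, Finset.card_filter_add_card_filter_not, Finset.card_range]
  omega

lemma avoid_insertMax_zero (h : IsPermList n π) (ha : AvoidsPat π [1, 3, 2]) :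
    AvoidsPat (insertMax π 0) [1, 3, 2] := by
  have hl := perm_length h
  intro hc
  obtain ⟨a, b, c, hs, h1, h2, h3⟩ := contains132_elim hc
  rw [insertMax] at hs
  simp only [List.take_zero, List.drop_zero, List.nil_append] at hs
  rcases List.sublist_cons_iff.mp hs with hs' | ⟨t, ht, hts⟩
  · exact ha (contains132_of hs' h1 h2 h3)
  · simp only [List.cons.injEq] at ht
    obtain ⟨rfl, rfl⟩ := ht
    have hbπ : b ∈ π := hts.subset (by simp)
    have := perm_mem_le h hbπ
    omega

lemma avoid_insertMax_rl (h : IsPermList n π) (ha : AvoidsPat π [1, 3, 2]) {k : ℕ}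
    (hk : IsRLMax π k) (hkn : k < n) : AvoidsPat (insertMax π (k + 1)) [1, 3, 2] := by
  have hl := perm_length h
  intro hc
  obtain ⟨a, b, c, hs, h1, h2, h3⟩ := contains132_elim hc
  rw [insertMax] at hs
  obtain ⟨l1, l2, heq, hs1, hs2⟩ := List.sublist_append_iff.mp hs
  rcases List.sublist_cons_iff.mp hs2 with hs2' | ⟨t, hl2, hts⟩
  · have hsub : [a, b, c].Sublist π := by
      rw [heq, ← List.take_append_drop (k + 1) π]
      exact List.Sublist.append hs1 hs2'
    exact ha (contains132_of hsub h1 h2 h3)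
  · subst hl2
    rcases l1 with _ | ⟨x, _ | ⟨y, _ | ⟨z, l1⟩⟩⟩
    · -- a = len + 1
      simp only [List.nil_append, List.cons.injEq] at heq
      obtain ⟨rfl, rfl⟩ := heq
      have hbπ : b ∈ π := List.mem_of_mem_drop (hts.subset (by simp))
      have := perm_mem_le h hbπ
      omega
    · -- l1 = [x] : x = a, b = len+1, t = [c]
      simp only [List.cons_append, List.nil_append, List.cons.injEq] at heq
      obtain ⟨rfl, hb, rfl⟩ := heq
      have hb' : b = π.length + 1 := hb
      have hcdrop : c ∈ π.drop (k + 1) := hts.subset (by simp)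
      have haTake : a ∈ π.take (k + 1) := hs1.subset (by simp)
      obtain ⟨m, hm, hcm⟩ := List.mem_iff_getElem.mp hcdrop
      have hmlen : (π.drop (k + 1)).length = π.length - (k + 1) := by simp
      have hidx : k + 1 + m < π.length := by rw [hmlen] at hm; omega
      have hcval : c = π.getD (k + 1 + m) 0 := by
        rw [getD_eq' hidx, ← List.getElem_drop]
        exact hcm.symm
      have hcM : c < π.getD k 0 := by
        rw [hcval]
        exact hk (k + 1 + m) (by omega) hidx
      have haM : a < π.getD k 0 := lt_trans h2 hcM
      have hklen : k < π.length := by omega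
      have haTk : a ∈ π.take k := by
        rw [List.take_succ, List.getElem?_eq_getElem hklen] at haTake
        simp only [Option.toList_some, List.mem_append, List.mem_singleton] at haTake
        rcases haTake with h' | h'
        · exact h'
        · rw [← getD_eq' hklen] at h'
          omega
      have hsub : [a, π.getD k 0, c].Sublist π := by
        conv_rhs => rw [← List.take_append_drop k π, List.drop_eq_getElem_cons hklen]
        rw [← getD_eq' hklen]
        refine List.Sublist.append (List.singleton_sublist.mpr haTk) ?_
        exact (List.singleton_sublist.mpr hcdrop).cons₂ _
      exact ha (contains132_of hsub haM h2 (not_lt.mpr hcM.le))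
    · -- l1 = [x, y] : c = len + 1
      simp only [List.cons_append, List.nil_append, List.cons.injEq] at heq
      obtain ⟨rfl, rfl, hc, -⟩ := heq
      have hc' : c = π.length + 1 := hc
      have hbπ : b ∈ π := List.mem_of_mem_take (hs1.subset (by simp))
      have := perm_mem_le h hbπ
      omega
    · -- l1 too long
      simp only [List.cons_append, List.nil_append, List.cons.injEq] at heq
      obtain ⟨-, -, -, habs⟩ := heq
      simp at habs

lemma contains_insertMax_not_rl (h : IsPermList n π) {i : ℕ} (hi1 : 1 ≤ i) (hin : i ≤ n)
    (hnk : ¬ IsRLMax π (i - 1)) : ContainsPat (insertMax π i) [1, 3, 2] := by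
  have hl := perm_length h
  rw [IsRLMax] at hnk
  push_neg at hnk
  obtain ⟨j, hj1, hj2, hj3⟩ := hnk
  have hi1l : i - 1 < π.length := by omega
  have hne : π.getD j 0 ≠ π.getD (i - 1) 0 := by
    rw [getD_eq' hj2, getD_eq' hi1l]
    intro he
    have := (List.Nodup.getElem_inj_iff (perm_nodup h)).mp he
    omega
  have hac : π.getD (i - 1) 0 < π.getD j 0 := by omega
  refine contains132_of (l := insertMax π i) (a := π.getD (i - 1) 0) (b := π.length + 1)
    (c := π.getD j 0) ?_ ?_ hac ?_
  · rw [insertMax]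
    have h1 : [π.getD (i - 1) 0].Sublist (π.take i) := by
      rw [List.singleton_sublist, getD_eq' hi1l]
      have he : π[i - 1] = (π.take i)[i - 1]'(by simp; omega) := (List.getElem_take ..).symm
      rw [he]
      exact List.getElem_mem _
    have h2 : [π.getD j 0].Sublist (π.drop i) := by
      rw [List.singleton_sublist]
      have hji : i + (j - i) < π.length := by omega
      have : (π.drop i)[j - i]'(by simp; omega) = π.getD j 0 := by
        rw [List.getElem_drop, getD_eq' hj2]
        congr 1
        omega
      rw [← this]
      exact List.getElem_mem _
    exact List.Sublist.append h1 (h2.cons₂ _)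
  · have := perm_mem_le h (getD_mem' hi1l)
    omega
  · have := perm_mem_le h (getD_mem' hj2)
    omega

end Main

lemma card_rl_pj {n r : ℕ} {π : List ℕ} (p : Fin (n - r) → ℕ) (hmono : StrictMono p)
    (hlt : ∀ j, p j < n) (hchar : ∀ i, i < n → (IsRLMax π i ↔ ∃ j, p j = i)) (j : Fin (n - r)) :
    ((Finset.range (p j + 1)).filter fun k => IsRLMax π k).card = (j : ℕ) + 1 := by
  classical
  have himg : ((Finset.range (p j + 1)).filter fun k => IsRLMax π k)
      = (Finset.univ.filter fun m : Fin (n - r) => m.val < (j : ℕ) + 1).image p := by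
    ext k
    simp only [Finset.mem_filter, Finset.mem_range, Finset.mem_image, Finset.mem_univ, true_and]
    constructor
    · rintro ⟨hk, hR⟩
      obtain ⟨m, hm⟩ := (hchar k (by have := hlt j; omega)).mp hR
      refine ⟨m, ?_, hm⟩
      have h1 : p m ≤ p j := by omega
      have h2 := Fin.le_def.mp (hmono.le_iff_le.mp h1)
      omega
    · rintro ⟨m, hmj, rfl⟩
      have hmle : m ≤ j := Fin.le_def.mpr (by omega)
      refine ⟨?_, (hchar _ (hlt m)).mpr ⟨m, rfl⟩⟩
      have := hmono.le_iff_le.mpr hmle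
      omega
  rw [himg, Finset.card_image_of_injective _ hmono.injective,
    card_filter_fin_lt _ _ (by have := j.isLt; omega)]

end Aux132

/-- Let `π` be a 132-avoiding permutation of length `n` with exactly `r` short values, and
let `p 0 < p 1 < … < p (n-r-1)` be the (0-indexed) positions of its `n - r` right-to-left
maxima.  Inserting the new maximum at the front gives a 132-avoiding permutation of length
`n+1` with exactly `r` short values; inserting it immediately after the `(j+1)`-st
right-to-left maximum gives a 132-avoiding permutation of length `n+1` with exactly
`r + (j+1)` short values.  Consequently, for each `s` with `r ≤ s ≤ n` there is exactly one
insertion position producing (with no removal) an element of `A(n+1, s)`, and no insertion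
avoiding 132 produces a short-value count outside `[r, n]`. -/
theorem insertMax_after_rlmax (n r : ℕ) (π : List ℕ)
    (h : IsPermList n π) (ha : AvoidsPat π [1, 3, 2]) (hr : shortCount π = r)
    (p : Fin (n - r) → ℕ) (hmono : StrictMono p) (hlt : ∀ j, p j < n)
    (hchar : ∀ i, i < n → (IsRLMax π i ↔ ∃ j, p j = i)) :
    (AvoidsPat (insertMax π 0) [1, 3, 2] ∧ IsPermList (n + 1) (insertMax π 0) ∧
      shortCount (insertMax π 0) = r) ∧
    (∀ j : Fin (n - r),
      AvoidsPat (insertMax π (p j + 1)) [1, 3, 2] ∧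
        IsPermList (n + 1) (insertMax π (p j + 1)) ∧
        shortCount (insertMax π (p j + 1)) = r + (j : ℕ) + 1) ∧
    (∀ s, r ≤ s → s ≤ n →
      ∃! i, i ≤ n ∧ AvoidsPat (insertMax π i) [1, 3, 2] ∧
        shortCount (insertMax π i) = s) ∧
    (∀ i, i ≤ n → AvoidsPat (insertMax π i) [1, 3, 2] →
      r ≤ shortCount (insertMax π i) ∧ shortCount (insertMax π i) ≤ n) := by
  have hl := perm_length h
  have hrn : r ≤ n := by
    rw [← hr, shortCount_eq, hl]
    exact le_trans (Finset.card_filter_le _ _) (le_of_eq (Finset.card_range n))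
  have count0 : shortCount (insertMax π 0) = r := by
    rw [shortCount_insertMax h (Nat.zero_le n)]
    simp [hr]
  have countj : ∀ j : Fin (n - r), shortCount (insertMax π (p j + 1)) = r + (j : ℕ) + 1 := by
    intro j
    rw [shortCount_insertMax h (by have := hlt j; omega), hr,
      card_rl_pj p hmono hlt hchar j]
    omega
  have avoid0 : AvoidsPat (insertMax π 0) [1, 3, 2] := avoid_insertMax_zero h ha
  have avoidj : ∀ j : Fin (n - r), AvoidsPat (insertMax π (p j + 1)) [1, 3, 2] := fun j =>
    avoid_insertMax_rl h ha ((hchar _ (hlt j)).mpr ⟨j, rfl⟩) (hlt j)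
  have hcases : ∀ i, i ≤ n → AvoidsPat (insertMax π i) [1, 3, 2] →
      i = 0 ∨ ∃ j : Fin (n - r), i = p j + 1 := by
    intro i hin hav
    rcases Nat.eq_zero_or_pos i with rfl | hpos
    · exact Or.inl rfl
    · have hR : IsRLMax π (i - 1) := by
        by_contra hn'
        exact hav (contains_insertMax_not_rl h hpos hin hn')
      obtain ⟨j, hj⟩ := (hchar (i - 1) (by omega)).mp hR
      exact Or.inr ⟨j, by omega⟩
  refine ⟨⟨avoid0, isPermList_insertMax h 0, count0⟩,
    fun j => ⟨avoidj j, isPermList_insertMax h _, countj j⟩, ?_, ?_⟩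
  · intro s hrs hsn
    rcases Nat.eq_or_lt_of_le hrs with rfl | hlt'
    · refine ⟨0, ⟨Nat.zero_le n, avoid0, count0⟩, ?_⟩
      rintro i ⟨hin, hav, hcnt⟩
      rcases hcases i hin hav with rfl | ⟨j, rfl⟩
      · rfl
      · rw [countj j] at hcnt
        omega
    · have hnr : s - r - 1 < n - r := by omega
      refine ⟨p ⟨s - r - 1, hnr⟩ + 1, ⟨by have := hlt ⟨s - r - 1, hnr⟩; omega,
        avoidj _, by rw [countj ⟨s - r - 1, hnr⟩]; simp; omega⟩, ?_⟩
      rintro i ⟨hin, hav, hcnt⟩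
      rcases hcases i hin hav with rfl | ⟨j, rfl⟩
      · rw [count0] at hcnt; omega
      · rw [countj j] at hcnt
        have hje : j = ⟨s - r - 1, hnr⟩ := Fin.ext (by simp; omega)
        rw [hje]
  · intro i hin hav
    rcases hcases i hin hav with rfl | ⟨j, rfl⟩
    · rw [count0]; exact ⟨le_refl r, hrn⟩
    · rw [countj j]
      have := j.isLt
      omega
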